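/- Let c : Fin p → ℕ be a nonincreasing sequence of positive integers with harmonic index har < p, and suppose citations at indices in a subset J ⊆ {1,...,har} are each increased (index j increased by k_j ≥ 1 with the new value c_j + k_j, assumed to keep the sequence valid). If ∑_{j=1}^{har} 1/c_j + 1/c_{har+1} − ∑_{j∈J} k_j/(c_j(c_j + k_j)) ≤ 1, then the harmonic index of the new sequence is at least har + 1. -/

import Mathlib

/-- If citations in a subset `J` of the `har`-core are increased by `k j` each,
and the stated condition holds, the harmonic index of the new sequence is at
least `har + 1`. -/
theorem stmt_15 (p : ℕ) (c : Fin p → ℕ) (hmono : Antitone c) (hpos : ∀ i, 0 < c i)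
    (har : ℕ)
    (hhar : IsGreatest {k : ℕ | 1 ≤ k ∧ k ≤ p ∧
      ∑ i ∈ Finset.univ.filter (fun i : Fin p => (i : ℕ) < k), (1 : ℝ) / (c i) ≤ 1} har)
    (hlt : har < p)
    (J : Finset (Fin p)) (hJ : ∀ j ∈ J, (j : ℕ) < har)
    (k : Fin p → ℕ) (hk : ∀ j ∈ J, 1 ≤ k j)
    (c' : Fin p → ℕ) (hc' : c' = fun i => if i ∈ J then c i + k i else c i)
    (hmono' : Antitone c')
    (hcond : (∑ i ∈ Finset.univ.filter (fun i : Fin p => (i : ℕ) < har), (1 : ℝ) / (c i)) +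
        1 / (c ⟨har, hlt⟩ : ℝ) -
        ∑ j ∈ J, (k j : ℝ) / ((c j : ℝ) * ((c j : ℝ) + (k j : ℝ))) ≤ 1) :
    har + 1 ≤ sSup {m : ℕ | 1 ≤ m ∧ m ≤ p ∧
      ∑ i ∈ Finset.univ.filter (fun i : Fin p => (i : ℕ) < m), (1 : ℝ) / (c' i) ≤ 1} := by
  set S := Finset.univ.filter (fun i : Fin p => (i : ℕ) < har + 1) with hS
  -- split the sum over S
  have hsplit : ∑ i ∈ S, (1 : ℝ) / (c i) =
      (∑ i ∈ Finset.univ.filter (fun i : Fin p => (i : ℕ) < har), (1 : ℝ) / (c i))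
        + 1 / (c ⟨har, hlt⟩ : ℝ) := by
    have : S = insert ⟨har, hlt⟩ (Finset.univ.filter (fun i : Fin p => (i : ℕ) < har)) := by
      ext i
      simp only [hS, Finset.mem_insert, Finset.mem_filter, Finset.mem_univ, true_and]
      constructor
      · intro h
        rcases Nat.lt_succ_iff_lt_or_eq.mp h with h | h
        · exact Or.inr h
        · exact Or.inl (Fin.ext h)
      · rintro (rfl | h)
        · exact Nat.lt_succ_self _
        · exact Nat.lt_succ_of_lt h
    rw [this, Finset.sum_insert (by simp)]
    ring
  have hJS : J ⊆ S := by
    intro j hj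
    simp only [hS, Finset.mem_filter, Finset.mem_univ, true_and]
    exact Nat.lt_succ_of_lt (hJ j hj)
  have hdiff : ∑ i ∈ S, ((1 : ℝ) / (c i) - 1 / (c' i)) =
      ∑ j ∈ J, (k j : ℝ) / ((c j : ℝ) * ((c j : ℝ) + (k j : ℝ))) := by
    rw [← Finset.sum_subset hJS (fun x _ hx => by simp [hc', hx])]
    apply Finset.sum_congr rfl
    intro j hj
    have hc0 : (0 : ℝ) < (c j : ℝ) := by exact_mod_cast hpos j
    have hk0 : (0 : ℝ) < (k j : ℝ) := by exact_mod_cast hk j hj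
    simp only [hc', hj, if_pos]
    push_cast
    field_simp
    ring
  have hsum' : ∑ i ∈ S, (1 : ℝ) / (c' i) ≤ 1 := by
    have : ∑ i ∈ S, (1 : ℝ) / (c' i) =
        ∑ i ∈ S, (1 : ℝ) / (c i) -
          ∑ j ∈ J, (k j : ℝ) / ((c j : ℝ) * ((c j : ℝ) + (k j : ℝ))) := by
      rw [← hdiff, Finset.sum_sub_distrib]; ring
    rw [this, hsplit]
    linarith
  have hmem : har + 1 ∈ {m : ℕ | 1 ≤ m ∧ m ≤ p ∧
      ∑ i ∈ Finset.univ.filter (fun i : Fin p => (i : ℕ) < m), (1 : ℝ) / (c' i) ≤ 1} :=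
    ⟨Nat.succ_le_succ (Nat.zero_le _), hlt, hsum'⟩
  have hbdd : BddAbove {m : ℕ | 1 ≤ m ∧ m ≤ p ∧
      ∑ i ∈ Finset.univ.filter (fun i : Fin p => (i : ℕ) < m), (1 : ℝ) / (c' i) ≤ 1} :=
    ⟨p, fun m hm => hm.2.1⟩
  exact le_csSup hbdd hmem
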